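/- For integers n ≥ d ≥ 1 and real x ≥ d, (d!/x^d) ∑_{1 ≤ j_1 < ... < j_d ≤ n} ∏_{r=0}^{d-1} (1 - (d-r)/x)^(j_{r+1}-j_r-1) = (1/x^n) ∑_{r=0}^{d} (-1)^r C(d,r) (x-r)^n, with j_0 = 0. -/

import Mathlib

open scoped Classical

/-- Strictly increasing sequences `0 = j 0 < j 1 < ... < j d ≤ n`. -/
noncomputable def incSeqs (d n : ℕ) : Finset (Fin (d + 1) → ℕ) :=
  (Fintype.piFinset fun _ => Finset.range (n + 1)).filter
    (fun j => j 0 = 0 ∧ StrictMono j ∧ j (Fin.last d) ≤ n)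

lemma mem_incSeqs {d n : ℕ} {j : Fin (d + 1) → ℕ} :
    j ∈ incSeqs d n ↔ j 0 = 0 ∧ StrictMono j ∧ j (Fin.last d) ≤ n := by
  simp only [incSeqs, Finset.mem_filter, Fintype.mem_piFinset, Finset.mem_range]
  refine ⟨fun h => h.2, fun h => ⟨fun i => ?_, h⟩⟩
  exact Nat.lt_succ_of_le (le_trans (h.2.1.monotone (Fin.le_last i)) h.2.2)

lemma j_pos {d : ℕ} {j : Fin (d + 1) → ℕ} (h0 : j 0 = 0) (hm : StrictMono j)
    {i : Fin (d + 1)} (hi : i ≠ 0) : 1 ≤ j i := by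
  have := hm (Fin.pos_of_ne_zero hi)
  omega

lemma incSeqs_d_zero (n : ℕ) : incSeqs 0 n = {fun _ => 0} := by
  ext j
  simp only [mem_incSeqs, Finset.mem_singleton]
  constructor
  · rintro ⟨h0, -, -⟩
    funext i
    have hi : i = 0 := Fin.ext (by have := i.isLt; omega)
    rw [hi, h0]
  · rintro rfl
    refine ⟨rfl, fun a b h => ?_, Nat.zero_le n⟩
    have : a = b := Fin.ext (by have := a.isLt; have := b.isLt; omega)
    exact absurd this h.ne

lemma incSeqs_n_zero (e : ℕ) : incSeqs (e + 1) 0 = ∅ := by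
  ext j
  simp only [mem_incSeqs, Finset.notMem_empty, iff_false, not_and]
  intro h0 hm
  have : (Fin.last (e + 1)) ≠ 0 := by simp [Fin.ext_iff]
  have := j_pos h0 hm this
  omega


lemma choose_sub_mul (e r : ℕ) :
    (e + 1 - r) * (e + 1).choose r = (e + 1) * e.choose r := by
  calc (e + 1 - r) * (e + 1).choose r = (e + 1).choose r * (e + 1 - r) := mul_comm _ _
    _ = e.choose r * (e + 1) := (Nat.choose_mul_succ_eq e r).symm
    _ = (e + 1) * e.choose r := mul_comm _ _

lemma R_rec (x : ℝ) (e n : ℕ) :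
    ∑ r ∈ Finset.range (e + 1 + 1), (-1 : ℝ) ^ r * ((e + 1).choose r) * (x - r) ^ (n + 1)
      = (x - ((e + 1 : ℕ) : ℝ)) *
          ∑ r ∈ Finset.range (e + 1 + 1), (-1 : ℝ) ^ r * ((e + 1).choose r) * (x - r) ^ n
        + ((e + 1 : ℕ) : ℝ) *
          ∑ r ∈ Finset.range (e + 1), (-1 : ℝ) ^ r * (e.choose r) * (x - r) ^ n := by
  have key : ∀ r ∈ Finset.range (e + 1 + 1),
      (-1 : ℝ) ^ r * ((e + 1).choose r) * (x - r) ^ (n + 1)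
        = (x - ((e + 1 : ℕ) : ℝ)) * ((-1 : ℝ) ^ r * ((e + 1).choose r) * (x - r) ^ n)
          + (-1 : ℝ) ^ r * (((e + 1) * e.choose r : ℕ) : ℝ) * (x - r) ^ n := by
    intro r hr
    rw [Finset.mem_range] at hr
    have hr' : r ≤ e + 1 := by omega
    have hc : (((e + 1 - r : ℕ) : ℝ)) * ((e + 1).choose r : ℝ)
        = (((e + 1) * e.choose r : ℕ) : ℝ) := by
      exact_mod_cast congrArg (Nat.cast (R := ℝ)) (choose_sub_mul e r)
    have hcast : ((e + 1 - r : ℕ) : ℝ) = ((e + 1 : ℕ) : ℝ) - r := by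
      push_cast [hr']
      ring
    rw [hcast] at hc
    have : (x - r) ^ (n + 1) = (x - r) ^ n * ((x - ((e+1:ℕ):ℝ)) + (((e+1:ℕ):ℝ) - r)) := by
      rw [pow_succ]
      ring_nf
    rw [this]
    linear_combination ((-1 : ℝ) ^ r * (x - (r : ℝ)) ^ n) * hc
  rw [Finset.sum_congr rfl key, Finset.sum_add_distrib, ← Finset.mul_sum]
  congr 1
  rw [Finset.sum_range_succ]
  have hz : ((e + 1) * e.choose (e + 1) : ℕ) = 0 := by
    simp [Nat.choose_eq_zero_of_lt]
  rw [hz, Nat.cast_zero, mul_zero, zero_mul, add_zero, Finset.mul_sum]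
  refine Finset.sum_congr rfl fun r _ => ?_
  push_cast
  ring

lemma sumA (x : ℝ) (e n : ℕ) :
    ∑ j ∈ (incSeqs (e + 1) (n + 1)).filter (fun j => j 1 = 1),
        ∏ r : Fin (e + 1),
          (1 - (((e + 1 : ℕ) : ℝ) - (r : ℕ)) / x) ^ (j r.succ - j r.castSucc - 1)
      = ∑ k ∈ incSeqs e n,
          ∏ r : Fin e, (1 - ((e : ℝ) - (r : ℕ)) / x) ^ (k r.succ - k r.castSucc - 1) := by
  refine Finset.sum_nbij' (fun j => fun i : Fin (e + 1) => j i.succ - 1)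
    (fun k => Fin.cases 0 (fun i => k i + 1)) ?_ ?_ ?_ ?_ ?_
  · intro j hj
    rw [Finset.mem_filter, mem_incSeqs] at hj
    obtain ⟨⟨h0, hm, hl⟩, h1⟩ := hj
    rw [mem_incSeqs]
    refine ⟨?_, ?_, ?_⟩
    · show j (0 : Fin (e + 1)).succ - 1 = 0
      rw [Fin.succ_zero_eq_one, h1]
    · rw [Fin.strictMono_iff_lt_succ]
      intro i
      show j i.castSucc.succ - 1 < j i.succ.succ - 1
      have h1le : 1 ≤ j i.castSucc.succ := j_pos h0 hm (Fin.succ_ne_zero _)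
      have hlt : j i.castSucc.succ < j i.succ.succ := by
        apply hm
        rw [Fin.succ_lt_succ_iff]
        exact (Fin.castSucc_lt_succ : i.castSucc < i.succ)
      omega
    · show j (Fin.last e).succ - 1 ≤ n
      have hll : (Fin.last e).succ = Fin.last (e + 1) := rfl
      rw [hll]
      omega
  · intro k hk
    rw [mem_incSeqs] at hk
    obtain ⟨h0, hm, hl⟩ := hk
    set jk := (Fin.cases 0 (fun i => k i + 1) : Fin (e + 2) → ℕ) with hjk
    have cz : jk 0 = 0 := rfl
    have cs : ∀ t : Fin (e + 1), jk t.succ = k t + 1 := fun t => Fin.cases_succ t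
    have c1 : jk 1 = k 0 + 1 := by rw [← Fin.succ_zero_eq_one]; exact cs 0
    rw [Finset.mem_filter, mem_incSeqs]
    refine ⟨⟨cz, ?_, ?_⟩, ?_⟩
    · rw [Fin.strictMono_iff_lt_succ]
      intro i
      refine Fin.cases ?_ (fun t => ?_) i
      · show jk (0 : Fin (e + 1)).castSucc < jk (0 : Fin (e + 1)).succ
        rw [Fin.castSucc_zero, cz, cs]
        omega
      · show jk (t.succ).castSucc < jk (t.succ).succ
        rw [← Fin.succ_castSucc, cs, cs]
        have := hm (Fin.castSucc_lt_succ : t.castSucc < t.succ)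
        omega
    · show jk (Fin.last (e + 1)) ≤ n + 1
      have : Fin.last (e + 1) = (Fin.last e).succ := rfl
      rw [this, cs]
      omega
    · show jk 1 = 1
      rw [c1, h0]
  · intro j hj
    rw [Finset.mem_filter, mem_incSeqs] at hj
    obtain ⟨⟨h0, hm, hl⟩, h1⟩ := hj
    funext i
    refine Fin.cases ?_ (fun t => ?_) i
    · show (0 : ℕ) = j 0
      exact h0.symm
    · show j t.succ - 1 + 1 = j t.succ
      have := j_pos h0 hm (Fin.succ_ne_zero t)
      omega
  · intro k hk
    rw [mem_incSeqs] at hk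
    funext i
    have : (Fin.cases 0 (fun i => k i + 1) : Fin (e + 2) → ℕ) i.succ = k i + 1 :=
      Fin.cases_succ i
    show (Fin.cases 0 (fun i => k i + 1) : Fin (e + 2) → ℕ) i.succ - 1 = k i
    omega
  · intro j hj
    rw [Finset.mem_filter, mem_incSeqs] at hj
    obtain ⟨⟨h0, hm, hl⟩, h1⟩ := hj
    rw [Fin.prod_univ_succ]
    have hz : j (0 : Fin (e + 1)).succ - j (0 : Fin (e + 1)).castSucc - 1 = 0 := by
      rw [Fin.succ_zero_eq_one, Fin.castSucc_zero, h0, h1]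
    rw [hz, pow_zero, one_mul]
    refine Finset.prod_congr rfl fun i _ => ?_
    have hcoef : ((e + 1 : ℕ) : ℝ) - ((i.succ : Fin (e + 1)) : ℕ) = (e : ℝ) - (i : ℕ) := by
      rw [Fin.val_succ]
      push_cast
      ring
    have hexp : j i.succ.succ - j i.succ.castSucc - 1
        = (j (i.succ : Fin (e + 1)).succ - 1) - (j (i.castSucc : Fin (e + 1)).succ - 1) - 1 := by
      rw [← Fin.succ_castSucc]
      have := j_pos h0 hm (i := (i.castSucc : Fin (e + 1)).succ) (Fin.succ_ne_zero _)
      omega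
    rw [hcoef, hexp]

lemma sumB (x : ℝ) (e n : ℕ) :
    ∑ j ∈ (incSeqs (e + 1) (n + 1)).filter (fun j => ¬j 1 = 1),
        ∏ r : Fin (e + 1),
          (1 - (((e + 1 : ℕ) : ℝ) - (r : ℕ)) / x) ^ (j r.succ - j r.castSucc - 1)
      = (1 - ((e + 1 : ℕ) : ℝ) / x) *
          ∑ j ∈ incSeqs (e + 1) n,
            ∏ r : Fin (e + 1),
              (1 - (((e + 1 : ℕ) : ℝ) - (r : ℕ)) / x) ^ (j r.succ - j r.castSucc - 1) := by
  rw [Finset.mul_sum]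
  have hone : (1 : Fin (e + 2)) ≠ 0 := by
    simp [Fin.ext_iff]
  refine Finset.sum_nbij' (fun j => fun i : Fin (e + 2) => j i - 1)
    (fun k => fun i : Fin (e + 2) => if i = 0 then 0 else k i + 1) ?_ ?_ ?_ ?_ ?_
  · intro j hj
    rw [Finset.mem_filter, mem_incSeqs] at hj
    obtain ⟨⟨h0, hm, hl⟩, h1⟩ := hj
    have hj1 : 2 ≤ j 1 := by
      have := j_pos h0 hm hone
      omega
    rw [mem_incSeqs]
    refine ⟨by show j 0 - 1 = 0; omega, ?_, ?_⟩
    · rw [Fin.strictMono_iff_lt_succ]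
      intro i
      show j i.castSucc - 1 < j i.succ - 1
      by_cases hi : i = 0
      · subst hi
        rw [Fin.castSucc_zero, Fin.succ_zero_eq_one, h0]
        omega
      · have h1le : 1 ≤ j i.castSucc := by
          apply j_pos h0 hm
          rw [Ne, Fin.castSucc_eq_zero_iff]
          exact hi
        have hlt : j i.castSucc < j i.succ := hm (Fin.castSucc_lt_succ : i.castSucc < i.succ)
        omega
    · show j (Fin.last (e + 1)) - 1 ≤ n
      omega
  · intro k hk
    rw [mem_incSeqs] at hk
    obtain ⟨h0, hm, hl⟩ := hk
    have hk1 : 1 ≤ k 1 := j_pos h0 hm hone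
    rw [Finset.mem_filter, mem_incSeqs]
    refine ⟨⟨by simp, ?_, ?_⟩, ?_⟩
    · rw [Fin.strictMono_iff_lt_succ]
      intro i
      show (if i.castSucc = 0 then 0 else k i.castSucc + 1)
          < (if i.succ = 0 then 0 else k i.succ + 1)
      rw [if_neg (Fin.succ_ne_zero i)]
      by_cases hi : i.castSucc = 0
      · rw [if_pos hi]
        omega
      · rw [if_neg hi]
        have : i.castSucc < i.succ := Fin.castSucc_lt_succ
        have := hm this
        omega
    · show (if Fin.last (e + 1) = 0 then 0 else k (Fin.last (e + 1)) + 1) ≤ n + 1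
      rw [if_neg (by simp [Fin.ext_iff])]
      omega
    · show ¬(if (1 : Fin (e + 2)) = 0 then 0 else k 1 + 1) = 1
      rw [if_neg hone]
      omega
  · intro j hj
    rw [Finset.mem_filter, mem_incSeqs] at hj
    obtain ⟨⟨h0, hm, hl⟩, h1⟩ := hj
    funext i
    show (if i = 0 then 0 else (j i - 1) + 1) = j i
    by_cases hi : i = 0
    · rw [if_pos hi, hi, h0]
    · rw [if_neg hi]
      have := j_pos h0 hm hi
      omega
  · intro k hk
    rw [mem_incSeqs] at hk
    obtain ⟨h0, hm, hl⟩ := hk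
    funext i
    show (if i = 0 then 0 else k i + 1) - 1 = k i
    by_cases hi : i = 0
    · rw [if_pos hi, hi, h0]
    · rw [if_neg hi]
      omega
  · intro j hj
    rw [Finset.mem_filter, mem_incSeqs] at hj
    obtain ⟨⟨h0, hm, hl⟩, h1⟩ := hj
    have hj1 : 2 ≤ j 1 := by
      have := j_pos h0 hm hone
      omega
    rw [Fin.prod_univ_succ, Fin.prod_univ_succ, ← mul_assoc]
    congr 1
    · -- head factors
      simp only [Fin.succ_zero_eq_one, Fin.castSucc_zero, Fin.val_zero, Nat.cast_zero,
        sub_zero]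
      have hE : j 1 - j 0 - 1 = ((j 1 - 1) - (j 0 - 1) - 1) + 1 := by omega
      rw [hE, pow_succ]
      ring
    · refine Finset.prod_congr rfl fun i _ => ?_
      have hexp : j i.succ.succ - j i.succ.castSucc - 1
          = (j i.succ.succ - 1) - (j i.succ.castSucc - 1) - 1 := by
        have : (i.succ.castSucc : Fin (e + 2)) ≠ 0 := by
          rw [← Fin.succ_castSucc]
          exact Fin.succ_ne_zero _
        have := j_pos h0 hm this
        omega
      rw [hexp]

lemma key' (x : ℝ) (hx : x ≠ 0) : ∀ n d : ℕ,
    (d.factorial : ℝ) * x ^ n * ∑ j ∈ incSeqs d n,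
        ∏ r : Fin d, (1 - ((d : ℝ) - (r : ℕ)) / x) ^ (j r.succ - j r.castSucc - 1)
      = x ^ d * ∑ r ∈ Finset.range (d + 1), (-1 : ℝ) ^ r * (d.choose r) * (x - r) ^ n := by
  intro n
  induction n with
  | zero =>
    intro d
    match d with
    | 0 => simp [incSeqs_d_zero]
    | e + 1 =>
      rw [incSeqs_n_zero]
      simp only [Finset.sum_empty, mul_zero, pow_zero]
      have h := Int.alternating_sum_range_choose (n := e + 1)
      rw [if_neg (Nat.succ_ne_zero e)] at h
      have h2 : ((∑ m ∈ Finset.range (e + 2), (-1 : ℤ) ^ m * ((e + 1).choose m) : ℤ) : ℝ)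
          = 0 := by rw [h]; norm_num
      push_cast at h2
      have h3 : ∑ r ∈ Finset.range (e + 1 + 1), (-1 : ℝ) ^ r * ((e + 1).choose r) * 1 = 0 := by
        simpa using h2
      rw [h3, mul_zero]
  | succ n ih =>
    intro d
    match d with
    | 0 =>
      simp [incSeqs_d_zero]
    | e + 1 =>
      rw [← Finset.sum_filter_add_sum_filter_not (incSeqs (e + 1) (n + 1))
        (fun j => j 1 = 1), sumA x e n, sumB x e n, R_rec x e n]
      have He := ih e
      have Hd := ih (e + 1)
      have hinv : x * x⁻¹ = 1 := mul_inv_cancel₀ hx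
      set Se := ∑ k ∈ incSeqs e n,
        ∏ r : Fin e, (1 - ((e : ℝ) - (r : ℕ)) / x) ^ (k r.succ - k r.castSucc - 1) with hSe
      set Sd := ∑ j ∈ incSeqs (e + 1) n,
        ∏ r : Fin (e + 1),
          (1 - (((e + 1 : ℕ) : ℝ) - (r : ℕ)) / x) ^ (j r.succ - j r.castSucc - 1) with hSd
      rw [Nat.factorial_succ] at Hd ⊢
      push_cast at He Hd ⊢
      rw [div_eq_mul_inv]
      linear_combination (((e : ℝ) + 1) * x) * He + (x - ((e : ℝ) + 1)) * Hd
        - (((e : ℝ) + 1) ^ 2 * (e.factorial : ℝ) * x ^ n * Sd) * hinv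

theorem stmt14 (d n : ℕ) (hd : 1 ≤ d) (hdn : d ≤ n) (x : ℝ) (hx : (d : ℝ) ≤ x) :
    ((d.factorial : ℝ) / x ^ d) * ∑ j ∈ incSeqs d n,
        ∏ r : Fin d, (1 - ((d : ℝ) - (r : ℕ)) / x) ^ (j r.succ - j r.castSucc - 1) =
      (1 / x ^ n) * ∑ r ∈ Finset.range (d + 1),
        (-1 : ℝ) ^ r * (d.choose r) * (x - r) ^ n := by
  have h1 : (1 : ℝ) ≤ (d : ℝ) := by exact_mod_cast hd
  have hx0 : x ≠ 0 := by linarith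
  have h := key' x hx0 n d
  set S := ∑ j ∈ incSeqs d n,
    ∏ r : Fin d, (1 - ((d : ℝ) - (r : ℕ)) / x) ^ (j r.succ - j r.castSucc - 1) with hS
  set R := ∑ r ∈ Finset.range (d + 1), (-1 : ℝ) ^ r * (d.choose r) * (x - r) ^ n with hR
  field_simp
  linear_combination h
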